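/- For a finite undirected simple graph G=(V,E) and an orientation Ḡ of G satisfying Invariant 1 (there is no improving path between any two vertices), the maximum out-degree Δ of Ḡ is optimal; that is, every orientation of G has maximum out-degree at least Δ. -/

import Mathlib

open Finset

/-- An orientation of a simple graph `G`: a choice, for each edge `{u,v}` of `G`,
of exactly one of the directed edges `(u,v)`, `(v,u)`. -/
structure GraphOrientation {V : Type*} (G : SimpleGraph V) where
  dir : V → V → Bool
  dir_adj : ∀ u v, dir u v = true → G.Adj u v
  exactly_one : ∀ u v, G.Adj u v → (dir u v = true ↔ ¬ dir v u = true)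

/-- Out-degree of `v` w.r.t. a directed-edge relation `d`. -/
def outDegF {V : Type*} [Fintype V] (d : V → V → Bool) (v : V) : ℕ :=
  (Finset.univ.filter fun w => d v w = true).card

/-- Out-degree of a vertex in an orientation. -/
def GraphOrientation.outDeg {V : Type*} [Fintype V] {G : SimpleGraph V}
    (o : GraphOrientation G) (v : V) : ℕ := outDegF o.dir v

/-- Maximum out-degree `Δ` of an orientation. -/
def GraphOrientation.maxOutDeg {V : Type*} [Fintype V] {G : SimpleGraph V}
    (o : GraphOrientation G) : ℕ := Finset.univ.sup o.outDeg

/-- `|E(S)|`: the number of edges of `G` with both endpoints in `S`. -/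
def edgeCount {V : Type*} [Fintype V] [DecidableEq V] (G : SimpleGraph V)
    [DecidableRel G.Adj] (S : Finset V) : ℕ :=
  (G.edgeFinset.filter fun e => ∀ x ∈ e, x ∈ S).card

/-- A directed path in an orientation: a list of distinct vertices, of length at
least two (i.e. `k ≥ 1` edges), with consecutive vertices joined by directed edges. -/
def IsDirPath {V : Type*} {G : SimpleGraph V} (o : GraphOrientation G) (p : List V) : Prop :=
  p.Nodup ∧ 2 ≤ p.length ∧ List.Chain' (fun a b => o.dir a b = true) p

/-- A directed path from `a` to `b`. -/
def IsPathFrom {V : Type*} {G : SimpleGraph V} (o : GraphOrientation G)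
    (p : List V) (a b : V) : Prop :=
  IsDirPath o p ∧ p.head? = some a ∧ p.getLast? = some b

/-- Invariant 1: there is no improving path between any two vertices, i.e. no directed
path `⟨a,…,b⟩` with `odeg(a) > odeg(b) + 1`. -/
def Invariant1 {V : Type*} [Fintype V] {G : SimpleGraph V} (o : GraphOrientation G) : Prop :=
  ∀ p a b, IsPathFrom o p a b → o.outDeg a ≤ o.outDeg b + 1

/-- Invariant 2: there is no improving path starting at a vertex of maximum out-degree. -/
def Invariant2 {V : Type*} [Fintype V] {G : SimpleGraph V} (o : GraphOrientation G) : Prop :=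
  ∀ p a b, IsPathFrom o p a b → o.outDeg a = o.maxOutDeg → o.outDeg a ≤ o.outDeg b + 1

/-- Flipping the directed path `p`: every directed edge `(v_i, v_{i+1})` of `p`
is replaced by the reversed edge `(v_{i+1}, v_i)`; all other edges are unchanged. -/
def flipDir {V : Type*} [DecidableEq V] (d : V → V → Bool) (p : List V) : V → V → Bool :=
  fun a b => if (a, b) ∈ p.zip p.tail ∨ (b, a) ∈ p.zip p.tail then d b a else d a b

/-- `G + {u,v}`: the graph obtained from `G` by inserting the edge `{u,v}`. -/
def addE {V : Type*} (G : SimpleGraph V) (u v : V) : SimpleGraph V :=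
  G ⊔ SimpleGraph.fromEdgeSet {s(u, v)}

/-- `G − {u,v}`: the graph obtained from `G` by deleting the edge `{u,v}`. -/
def delE {V : Type*} (G : SimpleGraph V) (u v : V) : SimpleGraph V :=
  G.deleteEdges {s(u, v)}


section Aux4


private lemma dedup_chain' {V : Type*} (r : V → V → Prop) :
    ∀ (l : List V) (a : V), List.Chain' r (a :: l) →
    ∃ m : List V, List.Chain' r (a :: m) ∧ (a :: m).getLast? = (a :: l).getLast? ∧
      (a :: m).Nodup := by
  intro l
  induction l with
  | nil => intro a _; exact ⟨[], List.isChain_singleton a, rfl, by simp⟩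
  | cons c l ih =>
    intro a h
    simp only [List.Chain', List.isChain_cons_cons] at h
    obtain ⟨m, hm, hlast, hnd⟩ := ih c h.2
    by_cases ha : a ∈ c :: m
    · classical
      obtain ⟨s, t, hst⟩ := List.append_of_mem ha
      have hsuf : (a :: t) <:+ (c :: m) := ⟨s, hst.symm⟩
      refine ⟨t, hm.suffix hsuf, ?_, hsuf.sublist.nodup hnd⟩
      · have h1 : (s ++ a :: t).getLast? = (a :: t).getLast? := by
          rw [List.getLast?_append]
          cases h2 : (a :: t).getLast? with
          | none => simp at h2
          | some x => simp
        rw [List.getLast?_cons_cons, ← hlast, hst, h1]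
    · refine ⟨c :: m, List.isChain_cons_cons.2 ⟨h.1, hm⟩, ?_, ?_⟩
      · rw [List.getLast?_cons_cons, List.getLast?_cons_cons, hlast]
      · exact List.nodup_cons.2 ⟨ha, hnd⟩


private lemma exists_path_of_rtg {V : Type*} {G : SimpleGraph V} (o : GraphOrientation G)
    {a b : V} (h : Relation.ReflTransGen (fun x y => o.dir x y = true) a b) (hne : a ≠ b) :
    ∃ p, IsPathFrom o p a b := by
  obtain ⟨l, hc, hl⟩ := List.exists_isChain_cons_of_relationReflTransGen h
  obtain ⟨m, hm, hlast, hnd⟩ := dedup_chain' _ l a hc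
  have hlb : (a :: m).getLast? = some b := by
    rw [hlast, List.getLast?_eq_getLast (by simp), hl]
  cases m with
  | nil => simp at hlb; exact absurd hlb hne
  | cons c m =>
      exact ⟨a :: c :: m, ⟨hnd, by simp, hm⟩, rfl, hlb⟩

end Aux4

/-- An orientation satisfying Invariant 1 (no improving path between any
two vertices) has optimal maximum out-degree: every orientation of `G` has maximum
out-degree at least `Δ(Ḡ)`. -/
theorem invariant1_optimal {V : Type*} [Fintype V] [DecidableEq V]
    {G : SimpleGraph V} (o : GraphOrientation G) (hinv : Invariant1 o) :
    ∀ o' : GraphOrientation G, o.maxOutDeg ≤ o'.maxOutDeg := by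
  classical
  intro o'
  set Δ := o.maxOutDeg with hΔdef
  rcases Nat.eq_zero_or_pos Δ with h0 | hpos
  · omega
  have huniv : (Finset.univ : Finset V).Nonempty := by
    by_contra h
    rw [Finset.not_nonempty_iff_eq_empty] at h
    have : Δ = 0 := by rw [hΔdef, GraphOrientation.maxOutDeg, h, Finset.sup_empty]; rfl
    omega
  obtain ⟨a, -, ha⟩ := Finset.exists_mem_eq_sup Finset.univ huniv o.outDeg
  -- ha : Δ = o.outDeg a
  set r : V → V → Prop := fun x y => o.dir x y = true with hr
  set S : Finset V := Finset.univ.filter (fun v => Relation.ReflTransGen r a v) with hS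
  have haS : a ∈ S := by
    simp only [hS, Finset.mem_filter, Finset.mem_univ, true_and]
    exact Relation.ReflTransGen.refl
  have hclosed : ∀ w ∈ S, ∀ x, o.dir w x = true → x ∈ S := by
    intro w hw x hx
    simp only [hS, Finset.mem_filter, Finset.mem_univ, true_and] at hw ⊢
    exact hw.tail hx
  have hdeg : ∀ w ∈ S, Δ ≤ o.outDeg w + 1 := by
    intro w hw
    by_cases hwa : w = a
    · subst hwa
      rw [hΔdef, GraphOrientation.maxOutDeg, ha]
      omega
    · simp only [hS, Finset.mem_filter, Finset.mem_univ, true_and] at hw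
      obtain ⟨p, hp⟩ := exists_path_of_rtg o hw (Ne.symm hwa)
      calc Δ = o.outDeg a := by rw [hΔdef, GraphOrientation.maxOutDeg, ha]
        _ ≤ o.outDeg w + 1 := hinv p a w hp
  -- counting
  have key : ∀ d : GraphOrientation G,
      2 * ∑ w ∈ S, ∑ x ∈ S, (if d.dir w x = true then 1 else 0) =
        ∑ w ∈ S, ∑ x ∈ S, (if G.Adj w x then 1 else 0) := by
    intro d
    have hcomm : ∑ w ∈ S, ∑ x ∈ S, (if d.dir w x = true then 1 else 0) =
        ∑ w ∈ S, ∑ x ∈ S, (if d.dir x w = true then 1 else 0) := Finset.sum_comm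
    rw [two_mul]
    nth_rewrite 2 [hcomm]
    rw [← Finset.sum_add_distrib]
    refine Finset.sum_congr rfl fun w _ => ?_
    rw [← Finset.sum_add_distrib]
    refine Finset.sum_congr rfl fun x _ => ?_
    by_cases hadj : G.Adj w x
    · have h1 := d.exactly_one w x hadj
      by_cases h2 : d.dir w x = true
      · simp [h2, h1.mp h2, hadj]
      · have h3 : d.dir x w = true := by
          by_contra h3
          exact h2 (h1.mpr h3)
        simp [h2, h3, hadj]
    · have h1 : ¬ d.dir w x = true := fun h => hadj (d.dir_adj w x h)
      have h2 : ¬ d.dir x w = true := fun h => hadj ((d.dir_adj x w h).symm)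
      simp [h1, h2, hadj]
  have hsum_eq : ∑ w ∈ S, ∑ x ∈ S, (if o.dir w x = true then 1 else 0) =
      ∑ w ∈ S, ∑ x ∈ S, (if o'.dir w x = true then 1 else 0) := by
    have := key o
    have := key o'
    omega
  -- lower bound for o
  have hinner_o : ∀ w ∈ S, ∑ x ∈ S, (if o.dir w x = true then 1 else 0) = o.outDeg w := by
    intro w hw
    have hset : S.filter (fun x => o.dir w x = true) =
        Finset.univ.filter (fun x => o.dir w x = true) := by
      ext x
      simp only [Finset.mem_filter, Finset.mem_univ, true_and]
      exact ⟨fun h => h.2, fun h => ⟨hclosed w hw x h, h⟩⟩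
    rw [Finset.sum_boole, hset]
    rfl
  have hlow : S.card * (Δ - 1) + 1 ≤ ∑ w ∈ S, ∑ x ∈ S, (if o.dir w x = true then 1 else 0) := by
    rw [Finset.sum_congr rfl hinner_o]
    rw [← Finset.add_sum_erase S o.outDeg haS]
    have h1 : (S.erase a).card * (Δ - 1) ≤ ∑ w ∈ S.erase a, o.outDeg w := by
      have := Finset.card_nsmul_le_sum (S.erase a) o.outDeg (Δ - 1)
        (fun w hw => by have := hdeg w (Finset.mem_of_mem_erase hw); omega)
      simpa [smul_eq_mul] using this
    have h2 : (S.erase a).card = S.card - 1 := Finset.card_erase_of_mem haS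
    rw [h2] at h1
    have h3 : 1 ≤ S.card := Finset.card_pos.2 ⟨a, haS⟩
    have h4 : Δ ≤ o.outDeg a := le_of_eq ha
    have h5 : S.card * (Δ - 1) = (S.card - 1) * (Δ - 1) + (Δ - 1) := by
      rcases Nat.exists_eq_add_of_le h3 with ⟨k, hk⟩
      rw [hk, Nat.add_sub_cancel_left]
      ring
    omega
  -- upper bound for o'
  have hhigh : ∑ w ∈ S, ∑ x ∈ S, (if o'.dir w x = true then 1 else 0) ≤
      S.card * o'.maxOutDeg := by
    have h1 : ∀ w ∈ S, ∑ x ∈ S, (if o'.dir w x = true then 1 else 0) ≤ o'.maxOutDeg := by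
      intro w _
      rw [Finset.sum_boole]
      calc (S.filter (fun x => o'.dir w x = true)).card
          ≤ (Finset.univ.filter (fun x => o'.dir w x = true)).card :=
            Finset.card_le_card (Finset.filter_subset_filter _ (Finset.subset_univ S))
        _ = o'.outDeg w := rfl
        _ ≤ o'.maxOutDeg := Finset.le_sup (Finset.mem_univ w)
    calc ∑ w ∈ S, ∑ x ∈ S, (if o'.dir w x = true then 1 else 0)
        ≤ ∑ _w ∈ S, o'.maxOutDeg := Finset.sum_le_sum h1
      _ = S.card * o'.maxOutDeg := by rw [Finset.sum_const, smul_eq_mul]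
  -- conclude
  by_contra hcon
  push_neg at hcon
  have hM : o'.maxOutDeg ≤ Δ - 1 := by omega
  have : S.card * o'.maxOutDeg ≤ S.card * (Δ - 1) := Nat.mul_le_mul_left _ hM
  omega
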